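/- arXiv:2202.13988 — 3 statements merged into one kernel-verified Lean document; each statement's English description precedes it below -/
import Mathlib

section
/- Let Z be a standard normal random variable and for z ∈ ℝ let m(z) = E[Z - z | Z > z] denote the mean of the conditioned overshoot. Then for all z > 1, one has 1/z - 2/z³ < m(z) < 1/z. -/
open MeasureTheory Set

open Filter Topology

lemma intE : Integrable (fun t : ℝ => Real.exp (-t ^ 2 / 2)) := by
  have h := integrable_exp_neg_mul_sq (b := (1:ℝ)/2) (by norm_num)
  have : (fun t : ℝ => Real.exp (-t ^ 2 / 2)) = fun t : ℝ => Real.exp (-(1/2) * t ^ 2) := by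
    funext t; ring_nf
  rw [this]; exact h

lemma hdE (t : ℝ) : HasDerivAt (fun s : ℝ => Real.exp (-s ^ 2 / 2)) (-t * Real.exp (-t ^ 2 / 2)) t := by
  have h1 : HasDerivAt (fun s : ℝ => -s ^ 2 / 2) (-t) t := by
    have h2 : HasDerivAt (fun s : ℝ => s ^ 2) (2 * t) t := by simpa using hasDerivAt_pow 2 t
    have h3 := (h2.neg).div_const 2
    exact h3.congr_deriv (by ring)
  exact ((Real.hasDerivAt_exp _).comp t h1).congr_deriv (by ring)

lemma tendE : Tendsto (fun t : ℝ => Real.exp (-t ^ 2 / 2)) atTop (𝓝 0) := by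
  apply Real.tendsto_exp_atBot.comp
  have h : Tendsto (fun t : ℝ => t ^ 2 / 2) atTop atTop :=
    (tendsto_pow_atTop two_ne_zero).atTop_div_const (by norm_num)
  have := tendsto_neg_atBot_iff.mpr h
  simpa [neg_div] using this

-- derivative of -E/t
lemma hd1 {t : ℝ} (ht : t ≠ 0) :
    HasDerivAt (fun s : ℝ => -(Real.exp (-s ^ 2 / 2) / s))
      (Real.exp (-t ^ 2 / 2) + Real.exp (-t ^ 2 / 2) / t ^ 2) t := by
  have h := ((hdE t).div (hasDerivAt_id t) ht).neg
  refine h.congr_deriv ?_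
  simp only [id]
  field_simp
  ring

-- derivative of -E*(t²+2)/(t³+3t)
lemma hd2 {t : ℝ} (ht : 0 < t) :
    HasDerivAt (fun s : ℝ => -(Real.exp (-s ^ 2 / 2) * ((s ^ 2 + 2) / (s ^ 3 + 3 * s))))
      (Real.exp (-t ^ 2 / 2) + Real.exp (-t ^ 2 / 2) * (6 / (t ^ 3 + 3 * t) ^ 2)) t := by
  have hden : t ^ 3 + 3 * t ≠ 0 := by positivity
  have hnum : HasDerivAt (fun s : ℝ => s ^ 2 + 2) (2 * t) t := by
    simpa using (hasDerivAt_pow 2 t).add_const 2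
  have hden' : HasDerivAt (fun s : ℝ => s ^ 3 + 3 * s) (3 * t ^ 2 + 3) t := by
    have := (hasDerivAt_pow 3 t).add ((hasDerivAt_id t).const_mul 3)
    exact this.congr_deriv (by ring)
  have hq := hnum.div hden' hden
  have h := ((hdE t).mul hq).neg
  refine h.congr_deriv ?_
  have h2 : (t ^ 3 + 3 * t) ^ 2 ≠ 0 := pow_ne_zero _ hden
  simp only [Pi.div_apply]
  field_simp
  ring

section
variable {z : ℝ} (hz : 1 < z)

lemma meas1 : Measurable (fun t : ℝ => Real.exp (-t ^ 2 / 2) / t ^ 2) := by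
  fun_prop

lemma int1 (hz : 1 < z) :
    IntegrableOn (fun t : ℝ => Real.exp (-t ^ 2 / 2) / t ^ 2) (Ioi z) := by
  refine Integrable.mono' intE.integrableOn meas1.aestronglyMeasurable ?_
  filter_upwards [ae_restrict_mem measurableSet_Ioi] with t ht
  have ht1 : 1 < t := hz.trans ht
  rw [Real.norm_eq_abs, abs_of_nonneg (by positivity)]
  have : (1:ℝ) ≤ t ^ 2 := by nlinarith
  calc Real.exp (-t ^ 2 / 2) / t ^ 2 ≤ Real.exp (-t ^ 2 / 2) / 1 :=
        div_le_div_of_nonneg_left (Real.exp_pos _).le (by norm_num) this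
    _ = Real.exp (-t ^ 2 / 2) := by ring

lemma int2 (hz : 1 < z) :
    IntegrableOn (fun t : ℝ => Real.exp (-t ^ 2 / 2) * (6 / (t ^ 3 + 3 * t) ^ 2)) (Ioi z) := by
  have hm : Measurable (fun t : ℝ => Real.exp (-t ^ 2 / 2) * (6 / (t ^ 3 + 3 * t) ^ 2)) := by
    exact ((Real.continuous_exp.comp (by continuity)).measurable).mul
      (measurable_const.div ((by continuity : Continuous fun t : ℝ => (t ^ 3 + 3 * t) ^ 2).measurable))
  refine Integrable.mono' intE.integrableOn hm.aestronglyMeasurable ?_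
  filter_upwards [ae_restrict_mem measurableSet_Ioi] with t ht
  have ht1 : 1 < t := hz.trans ht
  rw [Real.norm_eq_abs, abs_of_nonneg (by positivity)]
  have ht3 : (1:ℝ) < t ^ 3 := one_lt_pow₀ ht1 (by norm_num)
  have h4 : (4:ℝ) ≤ t ^ 3 + 3 * t := by nlinarith
  have h6 : (6:ℝ) ≤ (t ^ 3 + 3 * t) ^ 2 := by nlinarith
  have : 6 / (t ^ 3 + 3 * t) ^ 2 ≤ 1 := by
    rw [div_le_one (by positivity)]; linarith
  nlinarith [Real.exp_pos (-t ^ 2 / 2)]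

lemma ftcA (hz : 1 < z) :
    ∫ t in Ioi z, (Real.exp (-t ^ 2 / 2) + Real.exp (-t ^ 2 / 2) / t ^ 2)
      = Real.exp (-z ^ 2 / 2) / z := by
  have hint : IntegrableOn
      (fun t : ℝ => Real.exp (-t ^ 2 / 2) + Real.exp (-t ^ 2 / 2) / t ^ 2) (Ioi z) :=
    intE.integrableOn.add (int1 hz)
  have htend : Tendsto (fun t : ℝ => -(Real.exp (-t ^ 2 / 2) / t)) atTop (𝓝 0) := by
    rw [show (0:ℝ) = -0 by ring]
    apply Tendsto.neg
    apply squeeze_zero' ?_ ?_ tendE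
    · filter_upwards [eventually_ge_atTop (1:ℝ)] with t ht; positivity
    · filter_upwards [eventually_ge_atTop (1:ℝ)] with t ht
      calc Real.exp (-t ^ 2 / 2) / t ≤ Real.exp (-t ^ 2 / 2) / 1 :=
            div_le_div_of_nonneg_left (Real.exp_pos _).le (by norm_num) ht
        _ = _ := by ring
  have h := integral_Ioi_of_hasDerivAt_of_tendsto'
      (f := fun s : ℝ => -(Real.exp (-s ^ 2 / 2) / s))
      (f' := fun t : ℝ => Real.exp (-t ^ 2 / 2) + Real.exp (-t ^ 2 / 2) / t ^ 2)
      (fun x hx => hd1 (by have : (1:ℝ) < x := lt_of_lt_of_le hz hx; linarith)) hint htend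
  rw [h]; ring

lemma ftcB (hz : 1 < z) :
    ∫ t in Ioi z, (Real.exp (-t ^ 2 / 2) + Real.exp (-t ^ 2 / 2) * (6 / (t ^ 3 + 3 * t) ^ 2))
      = Real.exp (-z ^ 2 / 2) * ((z ^ 2 + 2) / (z ^ 3 + 3 * z)) := by
  have hint : IntegrableOn
      (fun t : ℝ => Real.exp (-t ^ 2 / 2) + Real.exp (-t ^ 2 / 2) * (6 / (t ^ 3 + 3 * t) ^ 2)) (Ioi z) :=
    intE.integrableOn.add (int2 hz)
  have htend : Tendsto (fun t : ℝ => -(Real.exp (-t ^ 2 / 2) * ((t ^ 2 + 2) / (t ^ 3 + 3 * t))))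
      atTop (𝓝 0) := by
    rw [show (0:ℝ) = -0 by ring]
    apply Tendsto.neg
    have h3 : Tendsto (fun t : ℝ => 3 * Real.exp (-t ^ 2 / 2)) atTop (𝓝 0) := by
      simpa using tendE.const_mul 3
    apply squeeze_zero' ?_ ?_ h3
    · filter_upwards [eventually_ge_atTop (1:ℝ)] with t ht
      have : 0 < t := by linarith
      positivity
    · filter_upwards [eventually_ge_atTop (1:ℝ)] with t ht
      have h0 : 0 < t := by linarith
      have hb : (t ^ 2 + 2) / (t ^ 3 + 3 * t) ≤ 3 := by
        rw [div_le_iff₀ (by positivity)]; nlinarith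
      have := Real.exp_pos (-t ^ 2 / 2)
      nlinarith [mul_le_mul_of_nonneg_left hb this.le]
  have h := integral_Ioi_of_hasDerivAt_of_tendsto'
      (f := fun s : ℝ => -(Real.exp (-s ^ 2 / 2) * ((s ^ 2 + 2) / (s ^ 3 + 3 * s))))
      (f' := fun t : ℝ => Real.exp (-t ^ 2 / 2) + Real.exp (-t ^ 2 / 2) * (6 / (t ^ 3 + 3 * t) ^ 2))
      (fun x hx => hd2 (by have : (1:ℝ) < x := lt_of_lt_of_le hz hx; linarith)) hint htend
  rw [h]; ring

lemma posE (hz : 1 < z) : 0 < ∫ t in Ioi z, Real.exp (-t ^ 2 / 2) := by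
  refine (setIntegral_pos_iff_support_of_nonneg_ae ?_ intE.integrableOn).mpr ?_
  · filter_upwards with t using (Real.exp_pos _).le
  · have hsub : Ioi z ⊆ Function.support (fun t : ℝ => Real.exp (-t ^ 2 / 2)) ∩ Ioi z :=
      fun t ht => ⟨(Real.exp_pos _).ne', ht⟩
    refine lt_of_lt_of_le ?_ (measure_mono hsub)
    simp [Real.volume_Ioi]

lemma posDiff (hz : 1 < z) :
    0 < ∫ t in Ioi z,
      (Real.exp (-t ^ 2 / 2) * (1 / z ^ 2) - Real.exp (-t ^ 2 / 2) / t ^ 2) := by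
  have hint : IntegrableOn
      (fun t : ℝ => Real.exp (-t ^ 2 / 2) * (1 / z ^ 2) - Real.exp (-t ^ 2 / 2) / t ^ 2)
      (Ioi z) := (intE.integrableOn.mul_const _).sub (int1 hz)
  have hposPt : ∀ t ∈ Ioi z,
      0 < Real.exp (-t ^ 2 / 2) * (1 / z ^ 2) - Real.exp (-t ^ 2 / 2) / t ^ 2 := by
    intro t ht
    have htz : z < t := ht
    have hz0 : (0:ℝ) < z := by linarith
    have ht0 : (0:ℝ) < t := by linarith
    have hlt : 1 / t ^ 2 < 1 / z ^ 2 := by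
      apply one_div_lt_one_div_of_lt (by positivity)
      nlinarith
    have hE := Real.exp_pos (-t ^ 2 / 2)
    have : Real.exp (-t ^ 2 / 2) / t ^ 2 = Real.exp (-t ^ 2 / 2) * (1 / t ^ 2) := by ring
    rw [this]
    nlinarith [mul_lt_mul_of_pos_left hlt hE]
  refine (setIntegral_pos_iff_support_of_nonneg_ae ?_ hint).mpr ?_
  · rw [EventuallyLE, ae_restrict_iff' measurableSet_Ioi]
    filter_upwards with t ht using (hposPt t ht).le
  · have hsub : Ioi z ⊆ Function.support (fun t : ℝ =>
        Real.exp (-t ^ 2 / 2) * (1 / z ^ 2) - Real.exp (-t ^ 2 / 2) / t ^ 2) ∩ Ioi z :=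
      fun t ht => ⟨(hposPt t ht).ne', ht⟩
    refine lt_of_lt_of_le ?_ (measure_mono hsub)
    simp [Real.volume_Ioi]

lemma posJ (hz : 1 < z) :
    0 < ∫ t in Ioi z, Real.exp (-t ^ 2 / 2) * (6 / (t ^ 3 + 3 * t) ^ 2) := by
  have hposPt : ∀ t ∈ Ioi z, 0 < Real.exp (-t ^ 2 / 2) * (6 / (t ^ 3 + 3 * t) ^ 2) := by
    intro t ht
    have : (1:ℝ) < t := hz.trans ht
    have ht0 : (0:ℝ) < t := by linarith
    positivity
  refine (setIntegral_pos_iff_support_of_nonneg_ae ?_ (int2 hz)).mpr ?_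
  · rw [EventuallyLE, ae_restrict_iff' measurableSet_Ioi]
    filter_upwards with t ht using (hposPt t ht).le
  · have hsub : Ioi z ⊆ Function.support (fun t : ℝ =>
        Real.exp (-t ^ 2 / 2) * (6 / (t ^ 3 + 3 * t) ^ 2)) ∩ Ioi z :=
      fun t ht => ⟨(hposPt t ht).ne', ht⟩
    refine lt_of_lt_of_le ?_ (measure_mono hsub)
    simp [Real.volume_Ioi]

end

/-- The conditional mean overshoot `m z = E[Z - z | Z > z]` for a standard normal `Z`. -/
noncomputable def condMean (z : ℝ) : ℝ :=
  Real.exp (-z ^ 2 / 2) / (∫ t in Set.Ioi z, Real.exp (-t ^ 2 / 2)) - z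

theorem condMean_bounds_pos :
    ∀ z : ℝ, 1 < z → 1 / z - 2 / z ^ 3 < condMean z ∧ condMean z < 1 / z := by
  intro z hz
  have hz0 : (0:ℝ) < z := by linarith
  set e : ℝ := Real.exp (-z ^ 2 / 2) with he
  set R : ℝ := ∫ t in Ioi z, Real.exp (-t ^ 2 / 2) with hRdef
  set I₂ : ℝ := ∫ t in Ioi z, Real.exp (-t ^ 2 / 2) / t ^ 2 with hI2def
  set J : ℝ := ∫ t in Ioi z, Real.exp (-t ^ 2 / 2) * (6 / (t ^ 3 + 3 * t) ^ 2) with hJdef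
  have hepos : 0 < e := Real.exp_pos _
  have hR : 0 < R := posE hz
  have hAe : R + I₂ = e / z := by
    rw [hRdef, hI2def, ← integral_add intE.integrableOn (int1 hz), ftcA hz]
  have hBe : R + J = e * ((z ^ 2 + 2) / (z ^ 3 + 3 * z)) := by
    rw [hRdef, hJdef, ← integral_add intE.integrableOn (int2 hz), ftcB hz]
  have hJpos : 0 < J := posJ hz
  have hI2lt : I₂ < R * (1 / z ^ 2) := by
    have h := posDiff hz
    rw [integral_sub (intE.integrableOn.mul_const _) (int1 hz),
      integral_mul_const] at h
    rw [hRdef, hI2def]; linarith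
  have hcm : condMean z = e / R - z := rfl
  constructor
  · -- lower bound
    have hden : (0:ℝ) < z ^ 3 + 3 * z := by positivity
    have hBe' : (R + J) * (z ^ 3 + 3 * z) = e * (z ^ 2 + 2) := by
      rw [hBe]; field_simp
    have h2 : R * (z ^ 3 + 3 * z) < e * (z ^ 2 + 2) := by nlinarith
    have h3 : (z ^ 3 + 3 * z) / (z ^ 2 + 2) < e / R :=
      (div_lt_div_iff₀ (by positivity) hR).mpr (by nlinarith)
    have h4 : 1 / z - 2 / z ^ 3 + z < (z ^ 3 + 3 * z) / (z ^ 2 + 2) := by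
      rw [show 1 / z - 2 / z ^ 3 + z = (z ^ 4 + z ^ 2 - 2) / z ^ 3 by field_simp; ring,
        div_lt_div_iff₀ (by positivity) (by positivity)]
      nlinarith
    rw [hcm]; linarith
  · -- upper bound
    have hAe' : (R + I₂) * z = e := by
      rw [hAe]; field_simp
    have hI2z : I₂ * z ^ 2 < R := by
      have h := mul_lt_mul_of_pos_right hI2lt (by positivity : (0:ℝ) < z ^ 2)
      have : R * (1 / z ^ 2) * z ^ 2 = R := by field_simp
      linarith
    have h1 : e * z < (z ^ 2 + 1) * R := by nlinarith
    have h2 : e / R < (z ^ 2 + 1) / z := (div_lt_div_iff₀ hR hz0).mpr h1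
    have h3 : (z ^ 2 + 1) / z = z + 1 / z := by field_simp
    rw [hcm]; linarith
end

section
/- The function m(z) = E[Z - z | Z > z], where Z is standard normal, is strictly decreasing on ℝ. -/
open MeasureTheory Set Filter

namespace CondMeanAux

noncomputable def f (z : ℝ) : ℝ := Real.exp (-z ^ 2 / 2)
noncomputable def F (z : ℝ) : ℝ := ∫ t in Set.Ioi z, f t

lemma f_pos (z : ℝ) : 0 < f z := Real.exp_pos _

lemma f_cont : Continuous f := by
  unfold f; continuity

lemma f_int : Integrable f := by
  have heq : f = fun x : ℝ => Real.exp (-(1/2) * x ^ 2) := by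
    funext x; unfold f; congr 1; ring
  rw [heq]
  exact integrable_exp_neg_mul_sq one_half_pos

lemma tf_int : Integrable (fun t : ℝ => t * f t) := by
  have heq : (fun t : ℝ => t * f t) = fun x : ℝ => x * Real.exp (-(1/2) * x ^ 2) := by
    funext x; unfold f; congr 2; ring
  rw [heq]
  exact integrable_mul_exp_neg_mul_sq one_half_pos

lemma f_deriv (z : ℝ) : HasDerivAt f (-z * f z) z := by
  have h1 : HasDerivAt (fun z : ℝ => -z ^ 2 / 2) (-z) z := by
    have := ((hasDerivAt_pow 2 z).neg.div_const 2)
    exact this.congr_deriv (by norm_num; ring)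
  have := h1.exp
  unfold f
  simpa [f, mul_comm] using this

lemma F_pos (z : ℝ) : 0 < F z := by
  rw [F, setIntegral_pos_iff_support_of_nonneg_ae
    (Filter.Eventually.of_forall fun x => (f_pos x).le) f_int.integrableOn]
  have : Function.support f = Set.univ := by
    ext x; simp [Function.support, (f_pos x).ne']
  rw [this, Set.univ_inter]
  simp [Real.volume_Ioi]

lemma F_deriv (z : ℝ) : HasDerivAt F (-(f z)) z := by
  have hFeq : F = fun u => (∫ t, f t) - ((∫ t in Set.Iic (0:ℝ), f t) + ∫ t in (0:ℝ)..u, f t) := by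
    funext u
    have h1 : (∫ t in Set.Iic u, f t) + ∫ t in Set.Ioi u, f t = ∫ t, f t :=
      intervalIntegral.integral_Iic_add_Ioi f_int.integrableOn f_int.integrableOn
    have h2 : (∫ t in Set.Iic u, f t) - ∫ t in Set.Iic (0:ℝ), f t = ∫ t in (0:ℝ)..u, f t :=
      intervalIntegral.integral_Iic_sub_Iic f_int.integrableOn f_int.integrableOn
    rw [F]; linarith
  have h : HasDerivAt (fun u => ∫ t in (0:ℝ)..u, f t) (f z) z :=
    intervalIntegral.integral_hasDerivAt_right (f_cont.intervalIntegrable _ _)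
      (f_cont.stronglyMeasurableAtFilter _ _) f_cont.continuousAt
  rw [hFeq]
  exact ((hasDerivAt_const z (∫ t, f t)).sub ((hasDerivAt_const z _).add h)).congr_deriv (by simp)

lemma integral_tf (z : ℝ) : ∫ t in Set.Ioi z, t * f t = f z := by
  have h := integral_Ioi_of_hasDerivAt_of_tendsto (f := fun t => -f t)
    (f' := fun t => t * f t) (a := z) (m := 0)
    (f_cont.neg.continuousWithinAt)
    (fun x _ => by exact (f_deriv x).neg.congr_deriv (by ring))
    tf_int.integrableOn ?_
  · simpa using h
  · have hf0 : Tendsto f atTop (nhds 0) := by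
      have h1 : Tendsto (fun z : ℝ => z ^ 2 / 2) atTop atTop :=
        (tendsto_pow_atTop two_ne_zero).atTop_div_const (by norm_num)
      have := Real.tendsto_exp_neg_atTop_nhds_zero.comp h1
      refine this.congr fun x => ?_
      simp [f, Function.comp, neg_div]
    simpa using hf0.neg

lemma psi_neg (z : ℝ) : z * F z < f z := by
  have key : 0 < ∫ t in Set.Ioi z, (t - z) * f t := by
    rw [setIntegral_pos_iff_support_of_nonneg_ae]
    · have hsub : Set.Ioi z ⊆ Function.support (fun t => (t - z) * f t) ∩ Set.Ioi z := by
        intro t ht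
        refine ⟨?_, ht⟩
        simp only [Function.mem_support]
        exact mul_ne_zero (sub_ne_zero.2 (ne_of_gt ht)) (f_pos t).ne'
      calc (0:ENNReal) < volume (Set.Ioi z) := by simp [Real.volume_Ioi]
        _ ≤ _ := measure_mono hsub
    · filter_upwards [ae_restrict_mem measurableSet_Ioi] with t ht
      exact mul_nonneg (by linarith [ht.out]) (f_pos t).le
    · exact ((tf_int.sub (f_int.const_mul z)).congr
        (Filter.Eventually.of_forall fun t => by simp only [Pi.sub_apply]; ring)).integrableOn
  have heq : ∫ t in Set.Ioi z, (t - z) * f t = f z - z * F z := by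
    have h1 : ∫ t in Set.Ioi z, (t - z) * f t
        = (∫ t in Set.Ioi z, t * f t) - ∫ t in Set.Ioi z, z * f t := by
      rw [← integral_sub tf_int.integrableOn ((f_int.const_mul z).integrableOn)]
      congr 1; funext t; ring
    rw [h1, integral_tf, MeasureTheory.integral_const_mul, F]
  rw [heq] at key; linarith

lemma f_lim : Tendsto f atTop (nhds 0) := by
  have h1 : Tendsto (fun z : ℝ => z ^ 2 / 2) atTop atTop :=
    (tendsto_pow_atTop two_ne_zero).atTop_div_const (by norm_num)
  have := Real.tendsto_exp_neg_atTop_nhds_zero.comp h1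
  refine this.congr fun x => ?_
  simp [f, Function.comp, neg_div]

lemma zf_lim : Tendsto (fun z : ℝ => z * f z) atTop (nhds 0) := by
  have hup : Tendsto (fun z : ℝ => z * Real.exp (-z)) atTop (nhds 0) := by
    have := Real.tendsto_pow_mul_exp_neg_atTop_nhds_zero 1
    simpa using this
  refine tendsto_of_tendsto_of_tendsto_of_le_of_le' tendsto_const_nhds hup ?_ ?_
  · filter_upwards [eventually_ge_atTop (0:ℝ)] with z hz
    exact mul_nonneg hz (f_pos z).le
  · filter_upwards [eventually_ge_atTop (2:ℝ)] with z hz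
    have : f z ≤ Real.exp (-z) := by
      rw [f]; apply Real.exp_le_exp.2; nlinarith
    exact mul_le_mul_of_nonneg_left this (by linarith)

lemma F_lim : Tendsto F atTop (nhds 0) := by
  refine tendsto_of_tendsto_of_tendsto_of_le_of_le' tendsto_const_nhds f_lim ?_ ?_
  · filter_upwards with z; exact (F_pos z).le
  · filter_upwards [eventually_ge_atTop (1:ℝ)] with z hz
    have h1 : F z ≤ z * F z := le_mul_of_one_le_left (F_pos z).le hz
    linarith [psi_neg z]

lemma z2F_lim : Tendsto (fun z : ℝ => z ^ 2 * F z) atTop (nhds 0) := by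
  refine tendsto_of_tendsto_of_tendsto_of_le_of_le' tendsto_const_nhds zf_lim ?_ ?_
  · filter_upwards [eventually_ge_atTop (0:ℝ)] with z hz
    exact mul_nonneg (by positivity) (F_pos z).le
  · filter_upwards [eventually_ge_atTop (0:ℝ)] with z hz
    have := psi_neg z
    nlinarith [F_pos z]

/-- If a function has everywhere negative derivative and tends to `0` at `+∞`, it is positive. -/
lemma pos_of_hasDerivAt_neg_tendsto {g g' : ℝ → ℝ} (hd : ∀ x, HasDerivAt g (g' x) x)
    (hneg : ∀ x, g' x < 0) (hlim : Tendsto g atTop (nhds 0)) (x : ℝ) : 0 < g x := by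
  have hanti : StrictAnti g := strictAnti_of_deriv_neg fun y => by
    rw [(hd y).deriv]; exact hneg y
  have h1 : (0:ℝ) ≤ g (x + 1) :=
    le_of_tendsto hlim (eventually_atTop.2 ⟨x + 1, fun y hy => hanti.antitone hy⟩)
  linarith [hanti (lt_add_one x)]

noncomputable def h (z : ℝ) : ℝ := (1 + z ^ 2) * F z - z * f z

lemma h_deriv (z : ℝ) : HasDerivAt h (2 * (z * F z - f z)) z := by
  have h1 : HasDerivAt (fun z : ℝ => 1 + z ^ 2) (2 * z) z := by
    simpa using (hasDerivAt_pow 2 z).const_add 1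
  have h2 := h1.mul (F_deriv z)
  have h3 := (hasDerivAt_id z).mul (f_deriv z)
  have := h2.sub h3
  simp only [id_eq] at this
  exact this.congr_deriv (by ring)

lemma h_pos (z : ℝ) : 0 < h z := by
  refine pos_of_hasDerivAt_neg_tendsto h_deriv (fun x => ?_) ?_ z
  · have := psi_neg x; linarith
  · have : Tendsto (fun z : ℝ => F z + z ^ 2 * F z - z * f z) atTop (nhds 0) := by
      have := (F_lim.add z2F_lim).sub zf_lim
      simpa using this
    refine this.congr fun z => ?_
    rw [h]; ring

noncomputable def phi (z : ℝ) : ℝ := F z ^ 2 + z * f z * F z - f z ^ 2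

lemma phi_deriv (z : ℝ) : HasDerivAt phi (-(f z * h z)) z := by
  have p1 := (F_deriv z).pow 2
  have p2 := ((hasDerivAt_id z).mul (f_deriv z)).mul (F_deriv z)
  have p3 := (f_deriv z).pow 2
  have := (p1.add p2).sub p3
  simp only [id_eq] at this
  exact this.congr_deriv (by rw [h, Pi.mul_apply, id_eq]; ring)

lemma phi_pos (z : ℝ) : 0 < phi z := by
  refine pos_of_hasDerivAt_neg_tendsto phi_deriv (fun x => ?_) ?_ z
  · have := mul_pos (f_pos x) (h_pos x); linarith
  · have : Tendsto (fun z : ℝ => F z * F z + (z * f z) * F z - f z * f z) atTop (nhds 0) := by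
      have := ((F_lim.mul F_lim).add (zf_lim.mul F_lim)).sub (f_lim.mul f_lim)
      simpa using this
    refine this.congr fun z => ?_
    rw [phi]; ring

lemma condMean_hasDerivAt (z : ℝ) :
    HasDerivAt condMean (((-z * f z) * F z - f z * (-(f z))) / F z ^ 2 - 1) z := by
  have h1 := ((f_deriv z).div (F_deriv z) (F_pos z).ne').sub (hasDerivAt_id z)
  exact h1

end CondMeanAux

theorem condMean_strictAnti : StrictAnti condMean := by
  apply strictAnti_of_deriv_neg
  intro z
  rw [(CondMeanAux.condMean_hasDerivAt z).deriv]
  have hF := CondMeanAux.F_pos z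
  have hphi := CondMeanAux.phi_pos z
  rw [CondMeanAux.phi] at hphi
  rw [div_sub_one (by positivity)]
  apply div_neg_of_neg_of_pos
  · nlinarith
  · positivity
end

section
/- Fix β with 0 < β ≤ 1 and let X₀ be a positive random variable with survival function P(X₀ > x) = (1 - (1-β)x)^{β/(1-β)} for 0 < x < 1/(1-β) if β < 1, and P(X₀ > x) = e^{-x} if β = 1. Define X_t = Λ(t)·X₀ where Λ(t) = 1 + βt. Then the family of densities c(x,t) of X_t normalized so that ∫_0^∞ x c(x,t) dx = 1 solves the Carr–Penrose equation ∂c/∂t = ∂/∂x[(1 - x/Λ(t))·c(x,t)] with Λ(t) = ∫_0^∞ x c dx / ∫_0^∞ c dx, i.e., these are self-similar solutions with ⟨X_t⟩ = 1 + βt. -/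
open MeasureTheory Set

/-- The mean `Λ(t) = 1 + β t` of the self-similar solution. -/
noncomputable def LamCP (β t : ℝ) : ℝ := 1 + β * t

/-- The density of the self-similar profile `X₀` with parameter `0 < β ≤ 1`,
obtained from the survival function `P(X₀ > x) = (1-(1-β)x)^{β/(1-β)}`
(for `β < 1`, supported on `(0, 1/(1-β))`) and `P(X₀ > x) = e^{-x}` for `β = 1`. -/
noncomputable def f0CP (β x : ℝ) : ℝ :=
  if β = 1 then Real.exp (-x)
  else if x < 1 / (1 - β) then β * (1 - (1 - β) * x) ^ (β / (1 - β) - 1) else 0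

/-- The density of `X_t = Λ(t)·X₀`, normalized so that `∫ x c(x,t) dx = 1`. -/
noncomputable def cCP (β x t : ℝ) : ℝ := f0CP β (x / LamCP β t) / (LamCP β t) ^ 2

lemma auxCP_intble_rpow {M r : ℝ} (hr : -1 < r) :
    MeasureTheory.IntegrableOn (fun x => (M - x) ^ r) (Set.Ioo (0:ℝ) M) := by
  have h := (intervalIntegral.intervalIntegrable_rpow' hr (a := 0) (b := M)).comp_sub_left M
  simp only [sub_zero, sub_self] at h
  rw [intervalIntegrable_iff] at h
  exact (h.mono_set (by rcases le_total 0 M with h'|h' <;> simp [Set.uIoc_of_le, Set.uIoc_of_ge, h', Set.Ioo_subset_Ioc_self] )).mono_set Set.Ioo_subset_Ioc_self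

lemma auxCP_int_rpow {M r : ℝ} (hM : 0 < M) (hr : -1 < r) :
    ∫ x in Set.Ioo (0:ℝ) M, (M - x) ^ r = M ^ (r+1) / (r+1) := by
  rw [← MeasureTheory.integral_Ioc_eq_integral_Ioo, ← intervalIntegral.integral_of_le hM.le,
    intervalIntegral.integral_comp_sub_left (fun u => (u:ℝ) ^ r) M]
  simp only [sub_self, sub_zero]
  rw [integral_rpow (Or.inl hr), Real.zero_rpow (by linarith)]
  ring

lemma auxCP_moments_lt (β : ℝ) (hβ0 : 0 < β) (hβ : β < 1) (t : ℝ) (ht : 0 ≤ t) :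
    (∫ x in Set.Ioi (0:ℝ), cCP β x t) = 1 / LamCP β t ∧
    (∫ x in Set.Ioi (0:ℝ), x * cCP β x t) = 1 := by
  have ha : (0:ℝ) < 1 - β := by linarith
  have hΛ : 0 < LamCP β t := by unfold LamCP; nlinarith
  set a := 1 - β with ha'
  set Λ := LamCP β t with hΛ'
  set p := β / a with hp'
  have hp : 0 < p := div_pos hβ0 ha
  set M := Λ / a with hM'
  have hM : 0 < M := div_pos hΛ ha
  set C := β * (a / Λ) ^ (p - 1) / Λ ^ 2 with hC'
  have hkey : ∀ x ∈ Set.Ioo (0:ℝ) M, cCP β x t = C * (M - x) ^ (p - 1) := by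
    intro x hx
    have hxM : x / Λ < 1 / a := by
      rw [div_lt_div_iff₀ hΛ ha]
      have := hx.2
      rw [hM', lt_div_iff₀ ha] at this
      linarith
    have h1 : 1 - a * (x / Λ) = (a / Λ) * (M - x) := by
      rw [hM']; field_simp
    rw [cCP, f0CP, if_neg hβ.ne, if_pos hxM, ← hΛ', ← ha', ← hp', h1,
      Real.mul_rpow (by positivity) (by nlinarith [hx.2] : (0:ℝ) ≤ M - x)]
    ring
  have hzero : ∀ x : ℝ, M ≤ x → cCP β x t = 0 := by
    intro x hx
    have hnx : ¬ (x / Λ < 1 / a) := by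
      rw [not_lt, div_le_div_iff₀ ha hΛ]
      rw [hM', div_le_iff₀ ha] at hx
      linarith
    rw [cCP, f0CP, if_neg hβ.ne, ← hΛ', ← ha', if_neg hnx, zero_div]
  have hdiff : ∀ (g : ℝ → ℝ), (∀ᵐ x ∂(volume : Measure ℝ),
      x ∈ Set.Ioi (0:ℝ) \ Set.Ioo 0 M → g x * cCP β x t = 0) := by
    intro g
    filter_upwards with x hx
    have : M ≤ x := by
      rcases hx with ⟨h1, h2⟩
      by_contra h
      exact h2 ⟨h1, lt_of_not_ge h⟩
    rw [hzero x this, mul_zero]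
  have hsplit : ∀ (g : ℝ → ℝ), (∫ x in Set.Ioi (0:ℝ), g x * cCP β x t)
      = ∫ x in Set.Ioo (0:ℝ) M, g x * cCP β x t := by
    intro g
    exact setIntegral_eq_of_subset_of_ae_diff_eq_zero measurableSet_Ioi.nullMeasurableSet
      Set.Ioo_subset_Ioi_self (hdiff g)
  -- abbreviations for the power values
  set s := a / Λ with hs'
  have hs : 0 < s := by positivity
  have hMs : M = s⁻¹ := by rw [hM', hs']; field_simp
  have hE : (0:ℝ) < s ^ p := Real.rpow_pos_of_pos hs p
  have hMp : M ^ p = (s ^ p)⁻¹ := by rw [hMs, ← Real.inv_rpow hs.le]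
  have hsp1 : s ^ (p-1) = s ^ p / s := by rw [Real.rpow_sub hs, Real.rpow_one]
  have hMp1 : M ^ (p+1) = M ^ p * M := by rw [Real.rpow_add hM, Real.rpow_one]
  clear_value a Λ p M C s
  have hzeroth : (∫ x in Set.Ioi (0:ℝ), cCP β x t) = 1 / Λ := by
    have := hsplit (fun _ => 1)
    simp only [one_mul] at this
    rw [this, setIntegral_congr_fun measurableSet_Ioo hkey, MeasureTheory.integral_const_mul,
      auxCP_int_rpow hM (by linarith), sub_add_cancel]
    have h2 : C * (M ^ p / p) = (s ^ p * (s ^ p)⁻¹) * (β / (s * Λ ^ 2 * p)) := by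
      rw [hC', hMp, hsp1]; ring
    rw [h2, mul_inv_cancel₀ hE.ne', one_mul, hs', hp']
    field_simp
  refine ⟨hzeroth, ?_⟩
  have hfirst := hsplit (fun y => y)
  rw [hfirst]
  have hkey2 : ∀ x ∈ Set.Ioo (0:ℝ) M, x * cCP β x t
      = M * (C * (M - x) ^ (p - 1)) - C * (M - x) ^ ((p-1) + 1) := by
    intro x hx
    rw [hkey x hx, Real.rpow_add_one (by nlinarith [hx.2] : (M:ℝ) - x ≠ 0)]
    ring
  rw [setIntegral_congr_fun measurableSet_Ioo hkey2, integral_sub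
      (((auxCP_intble_rpow (by linarith : (-1:ℝ) < p - 1)).const_mul C).const_mul M)
      ((auxCP_intble_rpow (by linarith : (-1:ℝ) < (p-1) + 1)).const_mul C),
    integral_const_mul M _, integral_const_mul C, integral_const_mul C,
    auxCP_int_rpow hM (by linarith), auxCP_int_rpow hM (by linarith), sub_add_cancel]
  have h2 : M * (C * (M ^ p / p)) - C * (M ^ (p+1) / (p+1))
      = (s ^ p * (s ^ p)⁻¹) * (β / (s ^ 2 * Λ ^ 2) / p)
        - (s ^ p * (s ^ p)⁻¹) * (β / (s ^ 2 * Λ ^ 2) / (p+1)) := by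
    rw [hMp1, hMp, hC', hsp1, hMs]; ring
  rw [h2, mul_inv_cancel₀ hE.ne', one_mul, one_mul, hs', hp', ha']
  have hb1 : (1:ℝ) - β ≠ 0 := by linarith
  field_simp
  ring

lemma auxCP_moments_one (t : ℝ) (ht : 0 ≤ t) :
    (∫ x in Set.Ioi (0:ℝ), cCP 1 x t) = 1 / LamCP 1 t ∧
    (∫ x in Set.Ioi (0:ℝ), x * cCP 1 x t) = 1 := by
  have hΛ : 0 < LamCP 1 t := by unfold LamCP; linarith
  set Λ := LamCP 1 t with hΛ'
  have hc : ∀ x : ℝ, cCP 1 x t = Real.exp (-(Λ⁻¹ * x)) / Λ ^ 2 := by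
    intro x
    rw [cCP, f0CP, if_pos rfl, ← hΛ']
    congr 2
    field_simp
  have h0 := Real.integral_rpow_mul_exp_neg_mul_Ioi (one_pos) (inv_pos.mpr hΛ)
  rw [sub_self] at h0
  simp only [Real.rpow_zero, one_mul, Real.Gamma_one, mul_one, one_div, inv_inv,
    Real.rpow_one] at h0
  have h1 := Real.integral_rpow_mul_exp_neg_mul_Ioi (two_pos) (inv_pos.mpr hΛ)
  have h21 : (2:ℝ) - 1 = 1 := by norm_num
  rw [h21] at h1
  simp only [Real.rpow_one, Real.Gamma_two, mul_one, one_div, inv_inv] at h1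
  rw [Real.rpow_two] at h1
  constructor
  · simp_rw [hc, MeasureTheory.integral_div, h0]
    rw [sq]
    field_simp
  · have heq : ∀ x : ℝ, x * (Real.exp (-(Λ⁻¹ * x)) / Λ ^ 2)
        = (x * Real.exp (-(Λ⁻¹ * x))) * ((Λ^2)⁻¹ : ℝ) := fun x => by ring
    simp_rw [hc, heq, MeasureTheory.integral_mul_const, h1]
    field_simp

lemma auxCP_pde (β : ℝ) (hβ0 : 0 < β) (hβ1 : β ≤ 1) (t x : ℝ) (ht : 0 ≤ t) (hx : 0 < x)
    (hin : β = 1 ∨ x < LamCP β t / (1 - β)) :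
    ∃ d : ℝ,
      HasDerivAt (fun s => cCP β x s) d t ∧
      HasDerivAt (fun y => (1 - y / LamCP β t) * cCP β y t) d x := by
  rcases eq_or_lt_of_le hβ1 with hβ | hβ
  · -- β = 1
    subst hβ
    have hΛ : (0:ℝ) < 1 + t := by linarith
    have hL2 : LamCP 1 t = 1 + t := by simp [LamCP]
    have hfun : (fun s => cCP 1 x s) = (fun s => Real.exp (-(x/(1+s)))/(1+s)^2) := by
      funext s; simp [cCP, f0CP, LamCP]
    have hd : HasDerivAt (fun s : ℝ => 1 + s) 1 t := by
      simpa using (hasDerivAt_id t).const_add 1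
    have hnum : HasDerivAt (fun s => Real.exp (-(x/(1+s))))
        (Real.exp (-(x/(1+t))) * -((0*(1+t) - x*1)/(1+t)^2)) t :=
      (((hasDerivAt_const t x).div hd hΛ.ne').neg).exp
    have htime := hnum.div (hd.pow 2) (pow_ne_zero 2 hΛ.ne')
    rw [hfun]
    refine ⟨_, htime, ?_⟩
    have hgfun : (fun y => (1 - y / LamCP 1 t) * cCP 1 y t)
        = (fun y => (1 - y/LamCP 1 t) * (Real.exp (-(y/LamCP 1 t))/(LamCP 1 t)^2)) := by
      funext y; rw [cCP, f0CP, if_pos rfl]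
    have h1 : HasDerivAt (fun y : ℝ => 1 - y / LamCP 1 t) (-(1/LamCP 1 t)) x := by
      simpa using ((hasDerivAt_id x).div_const (LamCP 1 t)).const_sub 1
    have hye : HasDerivAt (fun y => Real.exp (-(y / LamCP 1 t)))
        (Real.exp (-(x/LamCP 1 t)) * -(1/LamCP 1 t)) x := by
      exact (((hasDerivAt_id x).div_const _).neg).exp
    have hspace := h1.mul (hye.div_const ((LamCP 1 t)^2))
    rw [hgfun]
    convert hspace using 1
    · rfl
    · rfl
    · rfl
    rw [hL2]
    have h1t : (1:ℝ) + t ≠ 0 := hΛ.ne'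
    norm_num
    field_simp
    ring
  · -- β < 1
    have ha0 : (0:ℝ) < 1 - β := by linarith
    have hΛ0 : (0:ℝ) < 1 + β * t := by nlinarith
    have hxin : x < (1+β*t) / (1-β) := by
      rcases hin with h | h
      · exact absurd h hβ.ne
      · simpa [LamCP] using h
    have haxΛ : (1-β)*x < 1 + β*t := by
      rw [lt_div_iff₀ ha0] at hxin; linarith [hxin]
    set a := 1 - β with ha'
    set p := β / a with hp'
    set Λ := 1 + β * t with hΛ'
    have hLam : LamCP β t = Λ := rfl
    have hw : (0:ℝ) < 1 - a * (x / Λ) := by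
      have h2 : a * x / Λ < 1 := (div_lt_one hΛ0).mpr haxΛ
      rw [mul_div_assoc] at h2
      linarith
    -- eventual formulas
    have hcont : Continuous (fun s : ℝ => 1 + β * s) := by continuity
    have e1 : ∀ᶠ s in nhds t, (0:ℝ) < 1 + β*s :=
      ContinuousAt.eventually_lt continuousAt_const hcont.continuousAt hΛ0
    have e2 : ∀ᶠ s in nhds t, a*x < 1 + β*s :=
      ContinuousAt.eventually_lt continuousAt_const hcont.continuousAt
        (hΛ' ▸ haxΛ)
    have heq : (fun s => cCP β x s)
        =ᶠ[nhds t] (fun s => β*(1 - a*(x/(1+β*s)))^(p-1)/(1+β*s)^2) := by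
      filter_upwards [e1, e2] with s hs1 hs2
      have hcond : x / LamCP β s < 1 / a := by
        rw [div_lt_div_iff₀ (by simpa [LamCP] using hs1) ha0]
        simp only [LamCP]
        nlinarith [hs2]
      rw [cCP, f0CP, if_neg hβ.ne, if_pos hcond]
      simp only [LamCP]
      rfl
    have hL : HasDerivAt (fun s => 1+β*s) β t := by
      simpa using ((hasDerivAt_id t).const_mul β).const_add 1
    have hq : HasDerivAt (fun s => x/(1+β*s)) ((0*Λ - x*β)/Λ^2) t :=
      (hasDerivAt_const t x).div hL hΛ0.ne'
    have hw' : HasDerivAt (fun s => 1 - a*(x/(1+β*s))) (-(a*((0*Λ - x*β)/Λ^2))) t :=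
      (hq.const_mul a).const_sub 1
    have hpw := hw'.rpow_const (p := p - 1) (Or.inl hw.ne')
    have htime := (hpw.const_mul β).div (hL.pow 2) (pow_ne_zero 2 hΛ0.ne')
    -- space
    have e3 : ∀ᶠ y in nhds x, a*y < Λ :=
      ContinuousAt.eventually_lt (by fun_prop) continuousAt_const
        haxΛ
    have heq2 : (fun y => (1 - y / LamCP β t) * cCP β y t)
        =ᶠ[nhds x] (fun y => (1 - y/Λ)*(β*(1-a*(y/Λ))^(p-1)/Λ^2)) := by
      filter_upwards [e3] with y hy
      have hy' : (1-β)*y < Λ := ha' ▸ hy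
      have hcond : y / LamCP β t < 1 / (1-β) := by
        rw [hLam, div_lt_div_iff₀ hΛ0 ha0]
        linarith [hy']
      rw [cCP, f0CP, if_neg hβ.ne, if_pos hcond, hLam]
    have h1 : HasDerivAt (fun y : ℝ => 1 - y / Λ) (-(1/Λ)) x := by
      simpa using ((hasDerivAt_id x).div_const Λ).const_sub 1
    have hw2 : HasDerivAt (fun y => 1 - a*(y/Λ)) (-(a*(1/Λ))) x :=
      (((hasDerivAt_id x).div_const Λ).const_mul a).const_sub 1
    have hpw2 := hw2.rpow_const (p := p - 1) (Or.inl hw.ne')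
    have hspace := h1.mul ((hpw2.const_mul β).div_const (Λ^2))
    refine ⟨_, htime.congr_of_eventuallyEq heq, ?_⟩
    have hsp := hspace.congr_of_eventuallyEq heq2
    convert hsp using 1
    · rfl
    · rfl
    have hw1 : (1 - a*(x/Λ))^(p-1) = (1-a*(x/Λ))^(p-1-1) * (1-a*(x/Λ)) := by
      rw [← Real.rpow_add_one hw.ne' (p-1-1)]; norm_num
    clear_value a p Λ
    simp only [Pi.pow_apply]
    rw [← hΛ'] at *
    rw [hw1, hp', ha']
    have hβ1' : (1:ℝ) - β ≠ 0 := by linarith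
    norm_num
    field_simp
    ring

theorem carr_penrose_self_similar (β : ℝ) (hβ0 : 0 < β) (hβ1 : β ≤ 1) :
    -- mass conservation constraint: ∫₀^∞ x c(x,t) dx = 1
    (∀ t : ℝ, 0 ≤ t → (∫ x in Set.Ioi (0 : ℝ), x * cCP β x t) = 1) ∧
    -- Λ(t) is the ratio of the first to the zeroth moment, and ⟨X_t⟩ = 1 + βt
    (∀ t : ℝ, 0 ≤ t →
      LamCP β t =
        (∫ x in Set.Ioi (0 : ℝ), x * cCP β x t) / (∫ x in Set.Ioi (0 : ℝ), cCP β x t)) ∧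
    -- the Carr–Penrose equation ∂c/∂t = ∂/∂x[(1 - x/Λ(t)) c(x,t)] holds at interior points
    (∀ t x : ℝ, 0 ≤ t → 0 < x → (β = 1 ∨ x < LamCP β t / (1 - β)) →
      ∃ d : ℝ,
        HasDerivAt (fun s => cCP β x s) d t ∧
        HasDerivAt (fun y => (1 - y / LamCP β t) * cCP β y t) d x) := by

  have hmom : ∀ t : ℝ, 0 ≤ t → (∫ x in Set.Ioi (0:ℝ), cCP β x t) = 1 / LamCP β t ∧
      (∫ x in Set.Ioi (0:ℝ), x * cCP β x t) = 1 := by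
    intro t ht
    rcases eq_or_lt_of_le hβ1 with h | h
    · subst h; exact auxCP_moments_one t ht
    · exact auxCP_moments_lt β hβ0 h t ht
  refine ⟨fun t ht => (hmom t ht).2, fun t ht => ?_,
    fun t x ht hx hin => auxCP_pde β hβ0 hβ1 t x ht hx hin⟩
  rw [(hmom t ht).1, (hmom t ht).2, one_div, one_div, inv_inv]
end
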